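/- Let n ≥ 1 and let M = sup_{t ∈ (0,1)} log((1+t)/(1−t)) / log((1+2t−t²)/(1−t²)) (numerically M ≈ 1.3152). Then for all x, y ∈ Bⁿ one has j_{Bⁿ}(x,y) ≤ M·log(1 + c_{Bⁿ}(x,y)). -/

import Mathlib

open Metric Set Real

/-- The triangular ratio metric of `G`. -/
noncomputable def sMet {E : Type*} [MetricSpace E] (G : Set E) (x y : E) : ℝ :=
  sSup ((fun z => dist x y / (dist x z + dist z y)) '' frontier G)

/-- The Cassinian metric of `G`. -/
noncomputable def cMet {E : Type*} [MetricSpace E] (G : Set E) (x y : E) : ℝ :=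
  sSup ((fun z => dist x y / (dist x z * dist z y)) '' frontier G)

/-- The distance ratio metric of `G`. -/
noncomputable def jMet {E : Type*} [MetricSpace E] (G : Set E) (x y : E) : ℝ :=
  Real.log (1 + dist x y / min (infDist x (frontier G)) (infDist y (frontier G)))

/-- Core monotonicity lemma: `u/v` is monotone, in cross-multiplied form. -/
lemma cross_mono {d r R : ℝ} (hd : 0 < d) (hr : 0 < r) (hrR : r ≤ R) :
    (Real.log (d + r) - Real.log d) *
      (Real.log (d * d + d * R + R) - Real.log (d * d + d * R)) ≤
    (Real.log (d + R) - Real.log d) *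
      (Real.log (d * d + d * r + r) - Real.log (d * d + d * r)) := by
  have hR : 0 < R := hr.trans_le hrR
  set u : ℝ → ℝ := fun s => Real.log (d + s) - Real.log d with hu
  set v : ℝ → ℝ := fun s => Real.log (d * d + d * s + s) - Real.log (d * d + d * s) with hv
  -- positivity of v on (0, ∞)
  have hvpos : ∀ s : ℝ, 0 < s → 0 < v s := by
    intro s hs
    have h1 : (0:ℝ) < d * d + d * s := by positivity
    have h2 : d * d + d * s < d * d + d * s + s := by linarith
    exact sub_pos.2 (Real.log_lt_log h1 h2)
  have hupos : ∀ s : ℝ, 0 < s → 0 < u s := by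
    intro s hs
    exact sub_pos.2 (Real.log_lt_log hd (by linarith))
  -- derivative facts
  have hder : ∀ s : ℝ, 0 < s →
      HasDerivAt (fun t => u t / v t)
        ((1 / (d + s) * v s - u s * ((d + 1) / (d * d + d * s + s) - d / (d * d + d * s)))
          / (v s) ^ 2) s := by
    intro s hs
    have hds : (0:ℝ) < d + s := by linarith
    have hP : (0:ℝ) < d * d + d * s + s := by positivity
    have hQ : (0:ℝ) < d * d + d * s := by positivity
    have hu' : HasDerivAt u (1 / (d + s)) s := by
      have h1 : HasDerivAt (fun t : ℝ => d + t) 1 s := (hasDerivAt_id s).const_add d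
      have h2 := h1.log hds.ne'
      simpa [hu] using h2.sub_const (Real.log d)
    have hv' : HasDerivAt v ((d + 1) / (d * d + d * s + s) - d / (d * d + d * s)) s := by
      have h1 : HasDerivAt (fun t : ℝ => d * d + d * t + t) (d + 1) s := by
        have h0 : HasDerivAt (fun t : ℝ => d * d + d * t) d s := by
          simpa using (((hasDerivAt_id s).const_mul d).const_add (d * d))
        exact h0.add (hasDerivAt_id' s)
      have h2 : HasDerivAt (fun t : ℝ => d * d + d * t) d s := by
        simpa using (((hasDerivAt_id s).const_mul d).const_add (d * d))
      exact (h1.log hP.ne').sub (h2.log hQ.ne')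
    exact hu'.div hv' (hvpos s hs).ne'
  -- deriv nonneg
  have hderiv_nonneg : ∀ s : ℝ, 0 < s → 0 ≤ deriv (fun t => u t / v t) s := by
    intro s hs
    rw [(hder s hs).deriv]
    have hds : (0:ℝ) < d + s := by linarith
    have hP : (0:ℝ) < d * d + d * s + s := by positivity
    have hQ : (0:ℝ) < d * d + d * s := by positivity
    have h1 : d * u s ≤ s := by
      have : Real.log ((d + s) / d) ≤ (d + s) / d - 1 :=
        Real.log_le_sub_one_of_pos (by positivity)
      rw [Real.log_div hds.ne' hd.ne'] at this
      have h2 : u s ≤ s / d := by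
        simp only [hu]
        have : (d + s) / d - 1 = s / d := by field_simp; ring
        linarith [this ▸ ‹Real.log (d + s) - Real.log d ≤ (d + s) / d - 1›]
      calc d * u s ≤ d * (s / d) := by nlinarith [h2]
        _ = s := by field_simp
    have h2 : s ≤ (d * d + d * s + s) * v s := by
      have hlog : Real.log ((d * d + d * s) / (d * d + d * s + s)) ≤
          (d * d + d * s) / (d * d + d * s + s) - 1 :=
        Real.log_le_sub_one_of_pos (by positivity)
      rw [Real.log_div hQ.ne' hP.ne'] at hlog
      have hvs : s / (d * d + d * s + s) ≤ v s := by
        simp only [hv]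
        have he : 1 - (d * d + d * s) / (d * d + d * s + s) = s / (d * d + d * s + s) := by
          field_simp; ring
        linarith
      calc s = (d * d + d * s + s) * (s / (d * d + d * s + s)) := by field_simp
        _ ≤ (d * d + d * s + s) * v s := by nlinarith [hvs]
    have hun : 0 ≤ u s := (hupos s hs).le
    have hvn : 0 ≤ v s := (hvpos s hs).le
    apply div_nonneg _ (sq_nonneg _)
    have he : (d + 1) / (d * d + d * s + s) - d / (d * d + d * s) =
        d ^ 2 / ((d * d + d * s + s) * (d * d + d * s)) := by
      field_simp; ring
    rw [he, sub_nonneg]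
    rw [mul_div_assoc', show (1 : ℝ) / (d + s) * v s = v s / (d + s) by ring,
      div_le_div_iff₀ (by positivity) hds]
    -- u s * d^2 * (d+s) ≤ v s * ((P)*(Q))
    nlinarith [mul_le_mul_of_nonneg_right h1 (mul_nonneg hd.le hds.le),
      mul_le_mul_of_nonneg_right h2 (mul_nonneg hd.le hds.le)]
  -- monotone on Icc r R
  have hmono : MonotoneOn (fun t => u t / v t) (Set.Icc r R) := by
    apply monotoneOn_of_deriv_nonneg (convex_Icc r R)
    · intro s hs
      exact ((hder s (hr.trans_le hs.1)).continuousAt).continuousWithinAt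
    · intro s hs
      rw [interior_Icc] at hs
      exact ((hder s (hr.trans hs.1)).differentiableAt).differentiableWithinAt
    · intro s hs
      rw [interior_Icc] at hs
      exact hderiv_nonneg s (hr.trans hs.1)
  have := hmono (Set.left_mem_Icc.2 hrR) (Set.right_mem_Icc.2 hrR) hrR
  have hvr := hvpos r hr
  have hvR := hvpos R hR
  rw [div_le_div_iff₀ hvr hvR] at this
  simpa [hu, hv] using this

/-- The defining function of `M` is bounded by 2 on `(0,1)`. -/
lemma M_bddAbove : BddAbove ((fun t : ℝ =>
    Real.log ((1 + t) / (1 - t)) / Real.log ((1 + 2 * t - t ^ 2) / (1 - t ^ 2))) ''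
      Set.Ioo (0 : ℝ) 1) := by
  refine ⟨2, ?_⟩
  rintro _ ⟨t, ⟨ht0, ht1⟩, rfl⟩
  have h1 : (0:ℝ) < 1 - t := by linarith
  have h2 : (0:ℝ) < 1 - t ^ 2 := by nlinarith
  have h3 : (0:ℝ) < 1 + 2 * t - t ^ 2 := by nlinarith
  have harg : (1:ℝ) < (1 + 2 * t - t ^ 2) / (1 - t ^ 2) := by
    rw [lt_div_iff₀ h2]; nlinarith
  have hD : 0 < Real.log ((1 + 2 * t - t ^ 2) / (1 - t ^ 2)) := Real.log_pos harg
  rw [div_le_iff₀ hD]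
  have key : (1 + t) / (1 - t) ≤ ((1 + 2 * t - t ^ 2) / (1 - t ^ 2)) ^ 2 := by
    rw [div_pow, div_le_div_iff₀ h1 (by positivity)]
    nlinarith [sq_nonneg t, sq_nonneg (1 - t), sq_nonneg (t * (1 - t))]
  calc Real.log ((1 + t) / (1 - t)) ≤ Real.log (((1 + 2 * t - t ^ 2) / (1 - t ^ 2)) ^ 2) :=
        Real.log_le_log (by positivity) key
    _ = 2 * Real.log ((1 + 2 * t - t ^ 2) / (1 - t ^ 2)) := by
        rw [Real.log_pow]; push_cast; ring

section Euclid
variable {n : ℕ}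

/-- distance to the unit sphere from a point in the ball. -/
lemma infDist_sphere_eq (hn : 1 ≤ n) (x : EuclideanSpace ℝ (Fin n)) (hx : ‖x‖ < 1) :
    infDist x (sphere (0 : EuclideanSpace ℝ (Fin n)) 1) = 1 - ‖x‖ := by
  have e : EuclideanSpace ℝ (Fin n) := EuclideanSpace.single ⟨0, hn⟩ (1 : ℝ)
  have hne : (sphere (0 : EuclideanSpace ℝ (Fin n)) 1).Nonempty := by
    refine ⟨EuclideanSpace.single ⟨0, hn⟩ (1 : ℝ), ?_⟩
    simp [mem_sphere_iff_norm, EuclideanSpace.norm_single]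
  apply le_antisymm
  · -- exhibit a point at distance 1 - ‖x‖
    by_cases hx0 : x = 0
    · obtain ⟨z, hz⟩ := hne
      have h := (infDist_le_dist_of_mem hz : infDist x _ ≤ dist x z)
      simp only [mem_sphere_iff_norm, sub_zero] at hz
      have : dist x z = 1 := by
        rw [hx0, dist_comm, dist_zero_right, hz]
      rw [this] at h
      simpa [hx0] using h
    · have hxn : 0 < ‖x‖ := norm_pos_iff.2 hx0
      have hz : (‖x‖⁻¹ • x) ∈ sphere (0 : EuclideanSpace ℝ (Fin n)) 1 := by
        simp [mem_sphere_iff_norm, norm_smul, abs_of_pos (inv_pos.2 hxn),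
          inv_mul_cancel₀ hxn.ne']
      have h := (infDist_le_dist_of_mem hz : infDist x _ ≤ dist x (‖x‖⁻¹ • x))
      have hd : dist x (‖x‖⁻¹ • x) = 1 - ‖x‖ := by
        rw [dist_eq_norm]
        have : x - ‖x‖⁻¹ • x = (1 - ‖x‖⁻¹) • x := by
          rw [sub_smul, one_smul]
        rw [this, norm_smul, Real.norm_eq_abs]
        have h1 : (1:ℝ) ≤ ‖x‖⁻¹ := (one_le_inv₀ hxn).2 hx.le
        rw [abs_of_nonpos (by linarith)]
        field_simp; ring
      linarith [hd ▸ h]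
  · refine le_of_not_gt fun hlt => ?_
    obtain ⟨z, hz, hdz⟩ := (infDist_lt_iff hne).1 hlt
    simp only [mem_sphere_iff_norm, sub_zero] at hz
    rw [dist_eq_norm] at hdz
    have h2 : ‖z‖ - ‖x‖ ≤ ‖x - z‖ := by
      have h3 := norm_sub_norm_le z x
      rw [norm_sub_rev] at h3
      linarith
    rw [hz] at h2
    linarith

end Euclid


set_option maxHeartbeats 1000000 in
lemma main_aux (n : ℕ) (hn : 1 ≤ n) (M : ℝ)
    (hM : M = sSup ((fun t : ℝ =>
      Real.log ((1 + t) / (1 - t)) / Real.log ((1 + 2 * t - t ^ 2) / (1 - t ^ 2))) ''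
        Set.Ioo (0 : ℝ) 1))
    (x y : EuclideanSpace ℝ (Fin n))
    (hx : x ∈ Metric.ball (0 : EuclideanSpace ℝ (Fin n)) 1)
    (hy : y ∈ Metric.ball (0 : EuclideanSpace ℝ (Fin n)) 1)
    (hxy : ‖x‖ ≤ ‖y‖) :
    jMet (Metric.ball (0 : EuclideanSpace ℝ (Fin n)) 1) x y ≤
      M * Real.log (1 + cMet (Metric.ball (0 : EuclideanSpace ℝ (Fin n)) 1) x y) := by
  have hnx : ‖x‖ < 1 := mem_ball_zero_iff.1 hx
  have hny : ‖y‖ < 1 := mem_ball_zero_iff.1 hy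
  have hfr : frontier (Metric.ball (0 : EuclideanSpace ℝ (Fin n)) 1) =
      sphere (0 : EuclideanSpace ℝ (Fin n)) 1 := frontier_ball 0 one_ne_zero
  have hc0 : 0 ≤ cMet (Metric.ball (0 : EuclideanSpace ℝ (Fin n)) 1) x y := by
    rw [cMet]
    apply Real.sSup_nonneg
    rintro _ ⟨z, _, rfl⟩
    positivity
  set c := cMet (Metric.ball (0 : EuclideanSpace ℝ (Fin n)) 1) x y with hc
  have hlogc0 : 0 ≤ Real.log (1 + c) := Real.log_nonneg (by linarith)
  have hMge : ∀ t : ℝ, t ∈ Set.Ioo (0:ℝ) 1 →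
      Real.log ((1 + t) / (1 - t)) / Real.log ((1 + 2 * t - t ^ 2) / (1 - t ^ 2)) ≤ M := by
    intro t ht
    rw [hM]
    exact le_csSup M_bddAbove ⟨t, ht, rfl⟩
  have hM0 : 0 ≤ M := by
    refine le_trans ?_ (hMge (1/2) (by norm_num))
    apply div_nonneg <;> apply Real.log_nonneg <;> norm_num
  have hmin : min (infDist x (sphere (0 : EuclideanSpace ℝ (Fin n)) 1))
      (infDist y (sphere (0 : EuclideanSpace ℝ (Fin n)) 1)) = 1 - ‖y‖ := by
    rw [infDist_sphere_eq hn x hnx, infDist_sphere_eq hn y hny]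
    exact min_eq_right (by linarith)
  have hj : jMet (Metric.ball (0 : EuclideanSpace ℝ (Fin n)) 1) x y =
      Real.log (1 + dist x y / (1 - ‖y‖)) := by
    rw [jMet, hfr, hmin]
  rcases eq_or_lt_of_le (dist_nonneg : (0:ℝ) ≤ dist x y) with h0 | hrpos
  · rw [hj, ← h0]
    simp only [zero_div, add_zero, Real.log_one]
    positivity
  have hy0 : y ≠ 0 := by
    rintro rfl
    have hx0 : ‖x‖ = 0 := le_antisymm (by simpa using hxy) (norm_nonneg x)
    rw [norm_eq_zero] at hx0
    rw [hx0] at hrpos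
    simp at hrpos
  have ht0 : 0 < ‖y‖ := norm_pos_iff.2 hy0
  obtain ⟨r, hr⟩ : ∃ r : ℝ, r = dist x y := ⟨_, rfl⟩
  obtain ⟨d, hd⟩ : ∃ d : ℝ, d = 1 - ‖y‖ := ⟨_, rfl⟩
  obtain ⟨R, hR⟩ : ∃ R : ℝ, R = 2 * ‖y‖ := ⟨_, rfl⟩
  rw [← hr] at hrpos
  have hdpos : 0 < d := by rw [hd]; linarith
  have hRpos : 0 < R := by rw [hR]; linarith
  have hrR : r ≤ R := by
    have := dist_triangle x 0 y
    rw [dist_zero_left, dist_zero_right] at this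
    rw [hr, hR]; linarith
  -- the boundary point z = y/‖y‖
  obtain ⟨z, hzdef⟩ : ∃ z : EuclideanSpace ℝ (Fin n), z = ‖y‖⁻¹ • y := ⟨_, rfl⟩
  have hzs : z ∈ sphere (0 : EuclideanSpace ℝ (Fin n)) 1 := by
    simp [hzdef, mem_sphere_iff_norm, norm_smul, abs_of_pos (inv_pos.2 ht0),
      inv_mul_cancel₀ ht0.ne']
  have hzy : dist z y = d := by
    rw [dist_comm, dist_eq_norm]
    have he : y - z = (1 - ‖y‖⁻¹) • y := by rw [hzdef, sub_smul, one_smul]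
    rw [he, norm_smul, Real.norm_eq_abs]
    have h1 : (1:ℝ) ≤ ‖y‖⁻¹ := (one_le_inv₀ ht0).2 hny.le
    rw [abs_of_nonpos (by linarith), hd]
    field_simp; ring
  have hxz : dist x z ≤ r + d := by
    have := dist_triangle x y z
    rw [dist_comm y z, hzy, ← hr] at this
    exact this
  have hxzpos : 0 < dist x z := by
    rw [dist_pos]
    intro h
    have : ‖x‖ = 1 := by
      rw [h]; simpa [mem_sphere_iff_norm] using hzs
    linarith
  -- c is at least the value at z
  have hbdd : BddAbove ((fun w => dist x y / (dist x w * dist w y)) ''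
      frontier (Metric.ball (0 : EuclideanSpace ℝ (Fin n)) 1)) := by
    rw [hfr]
    refine ⟨r / ((1 - ‖x‖) * (1 - ‖y‖)), ?_⟩
    rintro _ ⟨w, hw, rfl⟩
    simp only [mem_sphere_iff_norm, sub_zero] at hw
    have h1 : 1 - ‖x‖ ≤ dist x w := by
      rw [dist_eq_norm]
      have h3 := norm_sub_norm_le w x
      rw [norm_sub_rev] at h3
      linarith
    have h2 : 1 - ‖y‖ ≤ dist w y := by
      rw [dist_eq_norm]
      have h3 := norm_sub_norm_le w y
      linarith
    rw [← hr]
    exact div_le_div_of_nonneg_left (by rw [hr]; positivity)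
      (by nlinarith) (by nlinarith)
  have hcge : r / ((r + d) * d) ≤ c := by
    have hmem : dist x y / (dist x z * dist z y) ∈
        ((fun w => dist x y / (dist x w * dist w y)) ''
          frontier (Metric.ball (0 : EuclideanSpace ℝ (Fin n)) 1)) := by
      rw [hfr]; exact ⟨z, hzs, rfl⟩
    refine le_trans ?_ (le_csSup hbdd hmem)
    rw [hzy, ← hr]
    exact div_le_div_of_nonneg_left hrpos.le (by positivity)
      (by nlinarith)
  -- log(1 + r/(d(d+r))) ≤ log(1+c)
  have hvr_le : Real.log (d * d + d * r + r) - Real.log (d * d + d * r) ≤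
      Real.log (1 + c) := by
    have hP : (0:ℝ) < d * d + d * r + r := by positivity
    have hQ : (0:ℝ) < d * d + d * r := by positivity
    rw [← Real.log_div hP.ne' hQ.ne']
    apply Real.log_le_log (by positivity)
    rw [div_le_iff₀ hQ]
    have he : r / ((r + d) * d) * (d * d + d * r) = r := by
      rw [div_mul_eq_mul_div, div_eq_iff (by positivity : ((r + d) * d) ≠ 0)]
      ring
    nlinarith [mul_le_mul_of_nonneg_right hcge hQ.le]
  -- monotonicity
  have hcross : (Real.log (d + r) - Real.log d) *
      (Real.log (d * d + d * R + R) - Real.log (d * d + d * R)) ≤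
      (Real.log (d + R) - Real.log d) *
      (Real.log (d * d + d * r + r) - Real.log (d * d + d * r)) :=
    cross_mono hdpos hrpos hrR
  -- identify endpoint values
  have hdR1 : d + R = 1 + ‖y‖ := by rw [hd, hR]; ring
  have hdd : d * d + d * R = 1 - ‖y‖ ^ 2 := by rw [hd, hR]; ring
  have hddR : d * d + d * R + R = 1 + 2 * ‖y‖ - ‖y‖ ^ 2 := by rw [hd, hR]; ring
  have h2 : (0:ℝ) < 1 - ‖y‖ ^ 2 := by nlinarith
  have h3 : (0:ℝ) < 1 + 2 * ‖y‖ - ‖y‖ ^ 2 := by nlinarith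
  have huR : Real.log (d + R) - Real.log d = Real.log ((1 + ‖y‖) / (1 - ‖y‖)) := by
    rw [Real.log_div (by positivity) (by rw [hd] at hdpos; exact hdpos.ne'), hdR1, hd]
  have hvR : Real.log (d * d + d * R + R) - Real.log (d * d + d * R) =
      Real.log ((1 + 2 * ‖y‖ - ‖y‖ ^ 2) / (1 - ‖y‖ ^ 2)) := by
    rw [Real.log_div h3.ne' h2.ne', hddR, hdd]
  have hvRpos : 0 < Real.log (d * d + d * R + R) - Real.log (d * d + d * R) := by
    have hQ : (0:ℝ) < d * d + d * R := by positivity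
    exact sub_pos.2 (Real.log_lt_log hQ (by linarith))
  have hvrpos : 0 ≤ Real.log (d * d + d * r + r) - Real.log (d * d + d * r) := by
    have hQ : (0:ℝ) < d * d + d * r := by positivity
    exact sub_nonneg.2 (Real.log_le_log hQ (by linarith))
  have huRpos : 0 ≤ Real.log (d + R) - Real.log d :=
    sub_nonneg.2 (Real.log_le_log hdpos (by linarith))
  have hur : Real.log (1 + dist x y / (1 - ‖y‖)) = Real.log (d + r) - Real.log d := by
    rw [← Real.log_div (by positivity) hdpos.ne']
    congr 1
    rw [hd, hr]
    have : (0:ℝ) < 1 - ‖y‖ := by linarith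
    field_simp
  have hfM : (Real.log (d + R) - Real.log d) /
      (Real.log (d * d + d * R + R) - Real.log (d * d + d * R)) ≤ M := by
    rw [huR, hvR]
    exact hMge ‖y‖ ⟨ht0, hny⟩
  rw [hj, hur]
  calc Real.log (d + r) - Real.log d
      ≤ (Real.log (d + R) - Real.log d) /
          (Real.log (d * d + d * R + R) - Real.log (d * d + d * R)) *
          (Real.log (d * d + d * r + r) - Real.log (d * d + d * r)) := by
        rw [div_mul_eq_mul_div, le_div_iff₀ hvRpos]
        linarith
    _ ≤ (Real.log (d + R) - Real.log d) /
          (Real.log (d * d + d * R + R) - Real.log (d * d + d * R)) *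
          Real.log (1 + c) := by
        apply mul_le_mul_of_nonneg_left hvr_le (div_nonneg huRpos hvRpos.le)
    _ ≤ M * Real.log (1 + c) := mul_le_mul_of_nonneg_right hfM hlogc0

/-- with `M = sup_{t ∈ (0,1)} log((1+t)/(1−t)) / log((1+2t−t²)/(1−t²))`,
for all `x, y ∈ Bⁿ` one has `j_{Bⁿ}(x,y) ≤ M·log(1 + c_{Bⁿ}(x,y))`. -/
theorem jMet_le_const_mul_log_one_add_cMet (n : ℕ) (hn : 1 ≤ n) (M : ℝ)
    (hM : M = sSup ((fun t : ℝ =>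
      Real.log ((1 + t) / (1 - t)) / Real.log ((1 + 2 * t - t ^ 2) / (1 - t ^ 2))) ''
        Set.Ioo (0 : ℝ) 1))
    (x y : EuclideanSpace ℝ (Fin n))
    (hx : x ∈ Metric.ball (0 : EuclideanSpace ℝ (Fin n)) 1)
    (hy : y ∈ Metric.ball (0 : EuclideanSpace ℝ (Fin n)) 1) :
    jMet (Metric.ball (0 : EuclideanSpace ℝ (Fin n)) 1) x y ≤
      M * Real.log (1 + cMet (Metric.ball (0 : EuclideanSpace ℝ (Fin n)) 1) x y) := by
  rcases le_total ‖x‖ ‖y‖ with h | h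
  · exact main_aux n hn M hM x y hx hy h
  · have hj : jMet (Metric.ball (0 : EuclideanSpace ℝ (Fin n)) 1) x y =
        jMet (Metric.ball (0 : EuclideanSpace ℝ (Fin n)) 1) y x := by
      rw [jMet, jMet, dist_comm, min_comm]
    have hcs : cMet (Metric.ball (0 : EuclideanSpace ℝ (Fin n)) 1) x y =
        cMet (Metric.ball (0 : EuclideanSpace ℝ (Fin n)) 1) y x := by
      rw [cMet, cMet]
      have he : (fun z : EuclideanSpace ℝ (Fin n) => dist x y / (dist x z * dist z y)) =
          fun z => dist y x / (dist y z * dist z x) := by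
        funext z
        rw [dist_comm x y, dist_comm x z, dist_comm z y, mul_comm]
      rw [he]
    rw [hj, hcs]
    exact main_aux n hn M hM y x hy hx h
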